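/- Let 0 < α ≤ √2 − 1 and define g(s) := ((1+α)s + (1−α))² − 4s·exp(α(s−1)) for real s. Then g(s) > 0 for all s ∈ (0,1), and g(1) = 0. -/

import Mathlib

/-- For 0 < α ≤ √2 − 1 and g(s) = ((1+α)s + (1−α))² − 4s·exp(α(s−1)),
we have g(s) > 0 on (0,1) and g(1) = 0. -/
theorem g_pos_on_unit_interval
    (α : ℝ) (hα0 : 0 < α) (hα1 : α ≤ Real.sqrt 2 - 1)
    (g : ℝ → ℝ)
    (hg : ∀ s : ℝ, g s = ((1 + α) * s + (1 - α)) ^ 2 - 4 * s * Real.exp (α * (s - 1))) :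
    (∀ s ∈ Set.Ioo (0 : ℝ) 1, 0 < g s) ∧ g 1 = 0 := by
  have hsq : (α + 1) ^ 2 ≤ 2 := by
    have h1 : α + 1 ≤ Real.sqrt 2 := by linarith
    have h2 : (0:ℝ) ≤ α + 1 := by linarith
    nlinarith [Real.sq_sqrt (by norm_num : (2:ℝ) ≥ 0)]
  have hα2 : α < 1 := by nlinarith
  constructor
  · rintro s ⟨hs0, hs1⟩
    rw [hg]
    set y : ℝ := α * (1 - s) with hy_def
    have hy : 0 < y := mul_pos hα0 (by linarith)
    have hD : (0:ℝ) < 1 + y + y ^ 2 / 2 := by positivity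
    have hexp : 1 + y + y ^ 2 / 2 + y ^ 3 / 6 ≤ Real.exp y := by
      have := Real.sum_le_exp_of_nonneg hy.le 4
      simp only [Finset.sum_range_succ, Finset.sum_range_zero, Nat.factorial] at this
      norm_num at this
      linarith
    have hlt : 1 + y + y ^ 2 / 2 < Real.exp y := by nlinarith [pow_pos hy 3]
    have hEeq : Real.exp (α * (s - 1)) = Real.exp (-y) := by
      congr 1; rw [hy_def]; ring
    have key : Real.exp (α * (s - 1)) * (1 + y + y ^ 2 / 2) < 1 := by
      rw [hEeq, Real.exp_neg]
      have h := mul_lt_mul_of_pos_left hlt (inv_pos.2 (Real.exp_pos y))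
      rwa [inv_mul_cancel₀ (Real.exp_pos y).ne'] at h
    have hpoly : 4 * s ≤ ((1 + α) * s + (1 - α)) ^ 2 * (1 + y + y ^ 2 / 2) := by
      have h1 : 0 ≤ (1 - s) ^ 2 * (1 - 2 * α - α ^ 2) := by
        apply mul_nonneg (sq_nonneg _); nlinarith
      have h2 : 0 ≤ (1 - s) ^ 3 * (α * (1 + α) * (1 - α)) :=
        mul_nonneg (pow_nonneg (by linarith) 3)
          (mul_nonneg (mul_nonneg hα0.le (by linarith)) (by linarith))
      have h3 : 0 ≤ (1 - s) ^ 4 * (α ^ 2 / 2 * (1 + α) ^ 2) := by positivity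
      have hid : ((1 + α) * s + (1 - α)) ^ 2 * (1 + y + y ^ 2 / 2) - 4 * s
          = (1 - s) ^ 2 * (1 - 2 * α - α ^ 2) + (1 - s) ^ 3 * (α * (1 + α) * (1 - α))
            + (1 - s) ^ 4 * (α ^ 2 / 2 * (1 + α) ^ 2) := by
        rw [hy_def]; ring
      linarith
    have hEpos := Real.exp_pos (α * (s - 1))
    have h4s : (0:ℝ) < 4 * s := by linarith
    have step : 4 * s * Real.exp (α * (s - 1)) * (1 + y + y ^ 2 / 2) < 4 * s := by
      have := mul_lt_mul_of_pos_left key h4s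
      nlinarith [this]
    have final : 4 * s * Real.exp (α * (s - 1)) * (1 + y + y ^ 2 / 2)
        < ((1 + α) * s + (1 - α)) ^ 2 * (1 + y + y ^ 2 / 2) := lt_of_lt_of_le step hpoly
    have := (mul_lt_mul_iff_of_pos_right hD).mp final
    linarith
  · rw [hg]; norm_num
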